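/- DP-SOA for Point_N, and more generally any online learner of Point_N whose output predictors always lie in Point^K_N, is β-concentrated whenever N ≥ 3KT²/β. -/

import Mathlib

open MeasureTheory
open scoped ENNReal

/-- The point class on `Fin N`. -/
def PointClass (N : ℕ) : Set (Fin N → Bool) :=
  {f | ∃ i : Fin N, f = fun x => decide (x = i)}

/-- Any online learner of `Point_N` (in particular DP-SOA) whose output predictors
always lie in `Point^K_N` is β-concentrated whenever `N ≥ 3KT²/β`. -/
theorem multipoint_learner_concentrated
    (T K N : ℕ) (β : ℝ) (hβ : 0 < β) (hβ1 : β ≤ 1)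
    (hT : 1 ≤ T) (hK : 1 ≤ K)
    (hN : (3 * K * T ^ 2 : ℝ) / β ≤ (N : ℝ))
    (A : (Fin T → Fin N × Bool) → Measure (Fin T → (Fin N → Bool)))
    (hprob : ∀ τ, IsProbabilityMeasure (A τ))
    -- all output predictors lie in `Point^K_N` almost surely
    (hout : ∀ τ, (A τ) {g | ∀ t,
        (Finset.univ.filter (fun x => g t x = true)).card ≤ K} = 1) :
    ∃ f₀ f₁ : Fin N → Bool, ∃ xeq xdif : Fin N,
      f₀ ∈ PointClass N ∧ f₁ ∈ PointClass N ∧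
      f₀ xeq = f₁ xeq ∧ f₀ xeq = f₀ xdif ∧ f₀ xdif ≠ f₁ xdif ∧
      1 - β ≤ ((A fun _ => (xeq, f₀ xeq)) {g | ∀ t, g t xdif = f₀ xdif}).toReal := by
  have hK1 : (1:ℝ) ≤ (K:ℝ) := by exact_mod_cast hK
  have hT1 : (1:ℝ) ≤ (T:ℝ) := by exact_mod_cast hT
  -- N ≥ 3
  have hNβ : 3 * (K:ℝ) * (T:ℝ) ^ 2 ≤ (N:ℝ) * β := by
    rw [div_le_iff₀ hβ] at hN; linarith
  have hN3 : 3 ≤ N := by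
    have h3 : (3:ℝ) ≤ (N:ℝ) := by nlinarith
    exact_mod_cast h3
  set z0 : Fin N := ⟨0, by omega⟩ with hz0
  set z1 : Fin N := ⟨1, by omega⟩ with hz1
  have hz01 : z1 ≠ z0 := by simp [hz0, hz1, Fin.ext_iff]
  set f₀ : Fin N → Bool := fun x => decide (x = z0) with hf₀
  set μ := A (fun _ => (z1, false)) with hμ
  haveI : IsProbabilityMeasure μ := hprob _
  set Good : Set (Fin T → Fin N → Bool) :=
    {g | ∀ t, (Finset.univ.filter (fun x => g t x = true)).card ≤ K} with hGoodDef
  have hGood : μ Good = 1 := hout _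
  have hGoodc : μ Goodᶜ = 0 := by
    rw [prob_compl_eq_one_sub (.of_discrete), hGood]; simp
  set E : Fin N → Set (Fin T → Fin N → Bool) :=
    fun x => {g | ∃ t, g t x = true} with hE
  set S : Finset (Fin N) := Finset.univ \ {z0, z1} with hS
  have hScard : S.card = N - 2 := by
    rw [hS, Finset.card_sdiff_of_subset (Finset.subset_univ _), Finset.card_univ,
      Fintype.card_fin, Finset.card_pair (Ne.symm hz01)]
  -- key: sum of measures of E x over S is at most K*T
  have hsum : ∑ x ∈ S, μ (E x) ≤ (K:ℝ≥0∞) * T := by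
    have heq : ∀ x, μ (E x) = μ (E x ∩ Good) :=
      fun x => (measure_inter_conull hGoodc).symm
    calc ∑ x ∈ S, μ (E x) = ∑ x ∈ S, ∫⁻ g, (E x ∩ Good).indicator 1 g ∂μ := by
          refine Finset.sum_congr rfl fun x _ => ?_
          rw [lintegral_indicator_one (.of_discrete), ← heq]
      _ = ∫⁻ g, ∑ x ∈ S, (E x ∩ Good).indicator 1 g ∂μ := by
          rw [lintegral_finset_sum]
          exact fun x _ => (measurable_one.indicator (.of_discrete))
      _ ≤ ∫⁻ _, (K:ℝ≥0∞) * T ∂μ := by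
          refine lintegral_mono fun g => ?_
          by_cases hg : g ∈ Good
          · calc ∑ x ∈ S, (E x ∩ Good).indicator 1 g
                ≤ ∑ x : Fin N, ∑ t : Fin T,
                    (if g t x = true then (1:ℝ≥0∞) else 0) := by
                  refine le_trans (Finset.sum_le_sum_of_subset (Finset.subset_univ S)) ?_
                  refine Finset.sum_le_sum fun x _ => ?_
                  rw [Set.indicator_apply]
                  split_ifs with hx
                  · obtain ⟨⟨t, ht⟩, -⟩ := hx
                    rw [Pi.one_apply]
                    refine le_trans ?_ (Finset.single_le_sum
                      (f := fun t => if g t x = true then (1:ℝ≥0∞) else 0)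
                      (fun _ _ => zero_le) (Finset.mem_univ t))
                    simp [ht]
                  · exact zero_le
              _ = ∑ t : Fin T, ∑ x : Fin N,
                    (if g t x = true then (1:ℝ≥0∞) else 0) := Finset.sum_comm
              _ ≤ ∑ _t : Fin T, (K:ℝ≥0∞) := by
                  refine Finset.sum_le_sum fun t _ => ?_
                  rw [Finset.sum_boole]
                  exact_mod_cast Nat.cast_le.mpr (hg t)
              _ = (K:ℝ≥0∞) * T := by simp [mul_comm]
          · have : ∀ x ∈ S, (E x ∩ Good).indicator
                (1 : (Fin T → Fin N → Bool) → ℝ≥0∞) g = 0 := by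
              intro x _
              exact Set.indicator_of_notMem (fun hx => hg hx.2) _
            rw [Finset.sum_congr rfl this]
            simp
      _ = (K:ℝ≥0∞) * T := by simp
  -- pick a minimizing x₀
  have hSne : S.Nonempty := by
    refine ⟨⟨2, by omega⟩, ?_⟩
    simp [hS, hz0, hz1, Fin.ext_iff]
  obtain ⟨x₀, hx₀S, hx₀min⟩ := Finset.exists_min_image S (fun x => μ (E x)) hSne
  have hx₀ : x₀ ≠ z0 ∧ x₀ ≠ z1 := by
    rw [hS] at hx₀S; simp at hx₀S; tauto
  -- μ (E x₀) ≤ ofReal β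
  have hcard : ((N - 2 : ℕ) : ℝ≥0∞) * μ (E x₀) ≤ (K:ℝ≥0∞) * T := by
    calc ((N - 2 : ℕ) : ℝ≥0∞) * μ (E x₀) = S.card • μ (E x₀) := by
          rw [hScard, nsmul_eq_mul]
      _ ≤ ∑ x ∈ S, μ (E x) := Finset.card_nsmul_le_sum S _ _ hx₀min
      _ ≤ _ := hsum
  have hKTle : (K:ℝ≥0∞) * T ≤ ((N - 2 : ℕ) : ℝ≥0∞) * ENNReal.ofReal β := by
    have hreal : (K:ℝ) * T ≤ ((N - 2 : ℕ) : ℝ) * β := by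
      have h2 : ((N - 2 : ℕ) : ℝ) = (N:ℝ) - 2 := by
        rw [Nat.cast_sub (by omega)]; norm_num
      have hT0 : (0:ℝ) ≤ (T:ℝ) := by linarith
      have hK0 : (0:ℝ) ≤ (K:ℝ) := by linarith
      have hTT : (T:ℝ) ≤ (T:ℝ)^2 := by nlinarith [mul_nonneg (sub_nonneg.mpr hT1) hT0]
      have e1 : (K:ℝ)*T ≤ (K:ℝ)*T^2 := mul_le_mul_of_nonneg_left hTT hK0
      have e2 : (1:ℝ) ≤ (K:ℝ)*T^2 := by nlinarith
      rw [h2]; nlinarith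
    calc (K:ℝ≥0∞) * T = ENNReal.ofReal ((K:ℝ) * T) := by
          rw [ENNReal.ofReal_mul (by positivity)]
          simp [ENNReal.ofReal_natCast]
      _ ≤ ENNReal.ofReal (((N - 2 : ℕ) : ℝ) * β) := ENNReal.ofReal_le_ofReal hreal
      _ = ((N - 2 : ℕ) : ℝ≥0∞) * ENNReal.ofReal β := by
          rw [ENNReal.ofReal_mul (by positivity)]
          simp [ENNReal.ofReal_natCast]
  have hmuE : μ (E x₀) ≤ ENNReal.ofReal β := by
    have hne : ((N - 2 : ℕ) : ℝ≥0∞) ≠ 0 :=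
      Nat.cast_ne_zero.mpr (by omega)
    exact (ENNReal.mul_le_mul_iff_right hne (by simp)).mp (hcard.trans hKTle)
  -- assemble
  refine ⟨f₀, fun x => decide (x = x₀), z1, x₀, ⟨z0, rfl⟩, ⟨x₀, rfl⟩, ?_, ?_, ?_, ?_⟩
  · simp [hf₀, hz01, Ne.symm hx₀.2]
  · simp [hf₀, hz01, hx₀.1]
  · simp [hf₀, hx₀.1]
  · have hfz1 : f₀ z1 = false := by simp [hf₀, hz01]
    have hfx₀ : f₀ x₀ = false := by simp [hf₀, hx₀.1]
    rw [hfz1, hfx₀]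
    have hset : {g : Fin T → Fin N → Bool | ∀ t, g t x₀ = false} = (E x₀)ᶜ := by
      ext g; simp [hE]
    rw [← hμ, hset, prob_compl_eq_one_sub (.of_discrete)]
    rw [ENNReal.toReal_sub_of_le (le_trans hmuE (by simpa using ENNReal.ofReal_le_ofReal hβ1)) (by simp)]
    have := ENNReal.toReal_le_of_le_ofReal hβ.le hmuE
    simp only [ENNReal.toReal_one]
    linarith
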